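/- For all integers n ≥ 1 and ℓ ≥ 1, the number of tree-like tableaux of size n+ℓ−1 whose rows 0, 1, …, ℓ−1 are nonempty and all have the same length equals the number of pairs (b, a) where b is a tree-like tableau of size n, a is a non-ambiguous tree with exactly ℓ rows, and the number of dotted cells of b having first coordinate 0 equals the number of columns of a. -/

import Mathlib

/-- `F` is a Young diagram (as a finite set of cells). -/
def IsYoungDiagram (F : Finset (ℕ × ℕ)) : Prop :=
  ∀ p ∈ F, ∀ x' ≤ p.1, ∀ y' ≤ p.2, (x', y') ∈ F

/-- `(F, D)` is a tree-like tableau: `F` is a Young diagram and `D ⊆ F` is the set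
of dotted cells. -/
def IsTLT (F D : Finset (ℕ × ℕ)) : Prop :=
  IsYoungDiagram F ∧ D ⊆ F ∧ (0, 0) ∈ D ∧
  (∀ p ∈ D, p ≠ (0, 0) →
    Xor' (∃ q ∈ D, q.1 = p.1 ∧ q.2 < p.2) (∃ r ∈ D, r.2 = p.2 ∧ r.1 < p.1)) ∧
  (∀ x : ℕ, (∃ y, (x, y) ∈ F) → ∃ y, (x, y) ∈ D) ∧
  (∀ y : ℕ, (∃ x, (x, y) ∈ F) → ∃ x, (x, y) ∈ D)

/-- The length of the row of index `x` of a diagram `F`. -/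
def rowLen (F : Finset (ℕ × ℕ)) (x : ℕ) : ℕ :=
  (F.filter (fun p => p.1 = x)).card

/-- A non-ambiguous tree: a finite set of points of `ℕ × ℕ`. -/
def IsNAT (A : Finset (ℕ × ℕ)) : Prop :=
  (0, 0) ∈ A ∧
  (∀ p ∈ A, p ≠ (0, 0) →
    Xor' (∃ q ∈ A, q.1 = p.1 ∧ q.2 < p.2) (∃ r ∈ A, r.2 = p.2 ∧ r.1 < p.1)) ∧
  (∀ p ∈ A, (∀ x' < p.1, ∃ q ∈ A, q.1 = x') ∧ (∀ y' < p.2, ∃ q ∈ A, q.2 = y'))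





/-- rank of y among elements of S -/
def cmpC (S : Finset ℕ) (y : ℕ) : ℕ := (S.filter (· < y)).card

/-- j-th smallest element of S -/
noncomputable def decC (S : Finset ℕ) (j : ℕ) : ℕ := Nat.nth (· ∈ S) j

lemma setOf_mem_finite (S : Finset ℕ) : {x | x ∈ S}.Finite := S.finite_toSet

lemma toFinset_eq (S : Finset ℕ) : (setOf_mem_finite S).toFinset = S := by
  ext x; simp

lemma cmpC_eq_count (S : Finset ℕ) (y : ℕ) : cmpC S y = Nat.count (· ∈ S) y := by
  rw [Nat.count_eq_card_filter_range, cmpC]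
  congr 1
  ext a
  simp [and_comm]

lemma decC_cmpC (S : Finset ℕ) {y : ℕ} (hy : y ∈ S) : decC S (cmpC S y) = y := by
  rw [cmpC_eq_count]; exact Nat.nth_count hy

lemma cmpC_decC (S : Finset ℕ) {j : ℕ} (hj : j < S.card) : cmpC S (decC S j) = j := by
  rw [cmpC_eq_count]
  exact Nat.count_nth_of_lt_card_finite (setOf_mem_finite S) (by rwa [toFinset_eq])

lemma decC_mem (S : Finset ℕ) {j : ℕ} (hj : j < S.card) : decC S j ∈ S := by
  have := Nat.nth_mem_of_lt_card (setOf_mem_finite S) (by rwa [toFinset_eq] : j < _)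
  simpa [decC] using this

lemma decC_lt_decC (S : Finset ℕ) {i j : ℕ} (h : i < j) (hj : j < S.card) :
    decC S i < decC S j :=
  Nat.nth_lt_nth_of_lt_card (setOf_mem_finite S) h (by rwa [toFinset_eq])

lemma cmpC_lt_cmpC (S : Finset ℕ) {y y' : ℕ} (hy : y ∈ S) (h : y < y') :
    cmpC S y < cmpC S y' := by
  apply Finset.card_lt_card
  constructor
  · intro a ha; simp only [Finset.mem_filter] at ha ⊢; exact ⟨ha.1, ha.2.trans h⟩
  · intro hsub
    have h1 : y ∈ S.filter (· < y') := by simp only [Finset.mem_filter]; exact ⟨hy, h⟩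
    have h2 := hsub h1
    simp only [Finset.mem_filter] at h2; omega

lemma cmpC_lt_card (S : Finset ℕ) {y : ℕ} (hy : y ∈ S) : cmpC S y < S.card := by
  apply Finset.card_lt_card
  refine ⟨Finset.filter_subset _ _, fun hsub => ?_⟩
  have h2 := hsub hy
  simp only [Finset.mem_filter] at h2; omega

lemma image_cmpC (S : Finset ℕ) : S.image (cmpC S) = Finset.range S.card := by
  apply Finset.eq_of_subset_of_card_le
  · intro j hj
    simp only [Finset.mem_image] at hj
    obtain ⟨y, hy, rfl⟩ := hj
    simpa using cmpC_lt_card S hy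
  · rw [Finset.card_range, Finset.card_image_of_injOn]
    intro a ha b hb hab
    rcases lt_trichotomy a b with h|h|h
    · exact absurd hab (cmpC_lt_cmpC S ha h).ne
    · exact h
    · exact absurd hab.symm (cmpC_lt_cmpC S hb h).ne

lemma image_decC (S : Finset ℕ) : (Finset.range S.card).image (decC S) = S := by
  apply Finset.eq_of_subset_of_card_le
  · intro y hy
    simp only [Finset.mem_image, Finset.mem_range] at hy
    obtain ⟨j, hj, rfl⟩ := hy
    exact decC_mem S hj
  · rw [Finset.card_image_of_injOn, Finset.card_range]
    intro a ha b hb hab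
    simp only [Finset.mem_coe, Finset.mem_range] at ha hb
    rcases lt_trichotomy a b with h|h|h
    · exact absurd hab (decC_lt_decC S h hb).ne
    · exact h
    · exact absurd hab.symm (decC_lt_decC S h ha).ne

/-- a downward-closed finset of ℕ is a range -/
lemma downclosed_eq_range (s : Finset ℕ) (h : ∀ a ∈ s, ∀ b ≤ a, b ∈ s) :
    s = Finset.range s.card := by
  have hsub : s ⊆ Finset.range s.card := by
    intro a ha
    rw [Finset.mem_range]
    have : Finset.range (a+1) ⊆ s := by
      intro b hb; exact h a ha b (by simpa using Nat.lt_succ_iff.mp (Finset.mem_range.mp hb))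
    have := Finset.card_le_card this
    simp at this; omega
  exact Finset.eq_of_subset_of_card_le hsub (by simp)

section
variable (A : Finset (ℕ × ℕ))

lemma card_rows_cols (h0 : (0,0) ∈ A)
    (hx : ∀ p ∈ A, p ≠ (0,0) →
      Xor' (∃ q ∈ A, q.1 = p.1 ∧ q.2 < p.2) (∃ r ∈ A, r.2 = p.2 ∧ r.1 < p.1)) :
    A.card + 1 = (A.image Prod.fst).card + (A.image Prod.snd).card := by
  classical
  set T := A.filter (fun p => ∀ q ∈ A, q.2 = p.2 → p.1 ≤ q.1) with hT
  set L := A.filter (fun p => ∀ q ∈ A, q.1 = p.1 → p.2 ≤ q.2) with hL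
  have hunion : T ∪ L = A := by
    apply Finset.Subset.antisymm
    · exact Finset.union_subset (Finset.filter_subset _ _) (Finset.filter_subset _ _)
    · intro p hp
      by_cases hpT : p ∈ T
      · exact Finset.mem_union_left _ hpT
      · apply Finset.mem_union_right
        rw [hL, Finset.mem_filter]
        refine ⟨hp, fun q hq hq1 => ?_⟩
        rw [hT, Finset.mem_filter] at hpT
        push_neg at hpT
        obtain ⟨r, hr, hr2, hr1⟩ := hpT hp
        have hpne : p ≠ (0,0) := by
          rintro rfl; omega
        have := hx p hp hpne
        rcases this with ⟨_, hno⟩ | ⟨_, hno⟩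
        · exact absurd ⟨r, hr, hr2, by omega⟩ hno
        · by_contra hc
          exact hno ⟨q, hq, hq1, by omega⟩
  have hinter : T ∩ L = {(0,0)} := by
    apply Finset.Subset.antisymm
    · intro p hp
      rw [Finset.mem_inter, hT, hL, Finset.mem_filter, Finset.mem_filter] at hp
      obtain ⟨⟨hpA, hpt⟩, _, hpl⟩ := hp
      rw [Finset.mem_singleton]
      by_contra hpne
      rcases hx p hpA hpne with ⟨⟨q, hq, hq1, hq2⟩, _⟩ | ⟨⟨r, hr, hr2, hr1⟩, _⟩
      · exact absurd (hpl q hq hq1) (by omega)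
      · exact absurd (hpt r hr hr2) (by omega)
    · intro p hp
      rw [Finset.mem_singleton] at hp
      subst hp
      rw [Finset.mem_inter, hT, hL, Finset.mem_filter, Finset.mem_filter]
      exact ⟨⟨h0, fun q _ _ => Nat.zero_le _⟩, h0, fun q _ _ => Nat.zero_le _⟩
  have hTcard : T.card = (A.image Prod.snd).card := by
    rw [← Finset.card_image_of_injOn (f := Prod.snd) (s := T)]
    · congr 1
      apply Finset.Subset.antisymm
      · exact Finset.image_subset_image (Finset.filter_subset _ _)
      · intro y hy
        rw [Finset.mem_image] at hy
        obtain ⟨p, hp, rfl⟩ := hy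
        obtain ⟨r, hr, hrmin⟩ := Finset.exists_min_image (A.filter (fun q => q.2 = p.2))
          Prod.fst ⟨p, by simp [hp]⟩
        rw [Finset.mem_filter] at hr
        rw [Finset.mem_image]
        refine ⟨r, ?_, hr.2⟩
        rw [hT, Finset.mem_filter]
        exact ⟨hr.1, fun q hq hq2 => hrmin q (by rw [Finset.mem_filter]; exact ⟨hq, by rw [hq2, hr.2]⟩)⟩
    · intro p hp q hq hpq
      rw [Finset.mem_coe, hT, Finset.mem_filter] at hp hq
      have h1 := hp.2 q hq.1 (by omega)
      have h2 := hq.2 p hp.1 (by omega)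
      exact Prod.ext (le_antisymm h1 h2) hpq
  have hLcard : L.card = (A.image Prod.fst).card := by
    rw [← Finset.card_image_of_injOn (f := Prod.fst) (s := L)]
    · congr 1
      apply Finset.Subset.antisymm
      · exact Finset.image_subset_image (Finset.filter_subset _ _)
      · intro x hxm
        rw [Finset.mem_image] at hxm
        obtain ⟨p, hp, rfl⟩ := hxm
        obtain ⟨r, hr, hrmin⟩ := Finset.exists_min_image (A.filter (fun q => q.1 = p.1))
          Prod.snd ⟨p, by simp [hp]⟩
        rw [Finset.mem_filter] at hr
        rw [Finset.mem_image]
        refine ⟨r, ?_, hr.2⟩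
        rw [hL, Finset.mem_filter]
        exact ⟨hr.1, fun q hq hq1 => hrmin q (by rw [Finset.mem_filter]; exact ⟨hq, by rw [hq1, hr.2]⟩)⟩
    · intro p hp q hq hpq
      rw [Finset.mem_coe, hL, Finset.mem_filter] at hp hq
      have h1 := hp.2 q hq.1 (by omega)
      have h2 := hq.2 p hp.1 (by omega)
      exact Prod.ext hpq (le_antisymm h1 h2)
  have := Finset.card_union_add_card_inter T L
  rw [hunion, hinter] at this
  simp only [Finset.card_singleton] at this
  omega
end



lemma snd_injOn_row (F : Finset (ℕ × ℕ)) (x : ℕ) :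
    Set.InjOn Prod.snd ((F.filter (fun p => p.1 = x) : Finset (ℕ × ℕ)) : Set (ℕ × ℕ)) := by
  intro p hp q hq hpq
  simp only [Finset.coe_filter, Set.mem_setOf_eq] at hp hq
  exact Prod.ext (hp.2.trans hq.2.symm) hpq

lemma fst_injOn_col (F : Finset (ℕ × ℕ)) (y : ℕ) :
    Set.InjOn Prod.fst ((F.filter (fun p => p.2 = y) : Finset (ℕ × ℕ)) : Set (ℕ × ℕ)) := by
  intro p hp q hq hpq
  simp only [Finset.coe_filter, Set.mem_setOf_eq] at hp hq
  exact Prod.ext hpq (hp.2.trans hq.2.symm)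

lemma mem_iff_lt_rowLen {F : Finset (ℕ × ℕ)} (hF : IsYoungDiagram F) (x y : ℕ) :
    (x, y) ∈ F ↔ y < rowLen F x := by
  set Rs := (F.filter (fun p => p.1 = x)).image Prod.snd with hRs
  have hcard : Rs.card = rowLen F x := Finset.card_image_of_injOn (snd_injOn_row F x)
  have hmem : ∀ y', ((x, y') ∈ F ↔ y' ∈ Rs) := by
    intro y'
    rw [hRs, Finset.mem_image]
    constructor
    · intro h; exact ⟨(x, y'), by simp [h], rfl⟩
    · rintro ⟨p, hp, rfl⟩
      rw [Finset.mem_filter] at hp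
      obtain ⟨p1, p2⟩ := p
      simp only at hp
      rw [hp.2] at hp
      exact hp.1
  have hdc : Rs = Finset.range Rs.card := by
    apply downclosed_eq_range
    intro a ha b hb
    rw [← hmem] at ha ⊢
    exact hF _ ha x le_rfl b hb
  rw [hmem, hdc, Finset.mem_range, hcard]

lemma rowLen_anti {F : Finset (ℕ × ℕ)} (hF : IsYoungDiagram F) {x x' : ℕ} (h : x' ≤ x) :
    rowLen F x ≤ rowLen F x' := by
  by_contra hc
  push_neg at hc
  have h1 : (x', rowLen F x') ∈ F := by
    have : (x, rowLen F x') ∈ F := (mem_iff_lt_rowLen hF x _).2 hc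
    exact hF _ this x' h _ le_rfl
  rw [mem_iff_lt_rowLen hF] at h1
  omega

def fwd (l : ℕ) (FD : Finset (ℕ × ℕ) × Finset (ℕ × ℕ)) :
    (Finset (ℕ × ℕ) × Finset (ℕ × ℕ)) × Finset (ℕ × ℕ) :=
  ((((FD.1.filter (fun p => l - 1 ≤ p.1)).image (fun p => (p.1 - (l - 1), p.2))),
    (((FD.2.filter (fun p => p.1 < l)).image Prod.snd).image (fun y => ((0 : ℕ), y)) ∪
      (FD.2.filter (fun p => l ≤ p.1)).image (fun p => (p.1 - (l - 1), p.2)))),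
   (FD.2.filter (fun p => p.1 < l)).image
     (fun p => (p.1, cmpC ((FD.2.filter (fun p => p.1 < l)).image Prod.snd) p.2)))

noncomputable def bwd (l : ℕ) (ba : (Finset (ℕ × ℕ) × Finset (ℕ × ℕ)) × Finset (ℕ × ℕ)) :
    Finset (ℕ × ℕ) × Finset (ℕ × ℕ) :=
  ((Finset.range (l - 1)) ×ˢ (Finset.range (rowLen ba.1.1 0)) ∪
     ba.1.1.image (fun p => (p.1 + (l - 1), p.2)),
   ba.2.image (fun p => (p.1, decC ((ba.1.2.filter (fun p => p.1 = 0)).image Prod.snd) p.2)) ∪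
     (ba.1.2.filter (fun p => 1 ≤ p.1)).image (fun p => (p.1 + (l - 1), p.2)))

lemma cmpC_mono (S : Finset ℕ) {y y' : ℕ} (h : y ≤ y') : cmpC S y ≤ cmpC S y' :=
  Finset.card_le_card (fun a ha => by
    simp only [Finset.mem_filter] at ha ⊢; exact ⟨ha.1, lt_of_lt_of_le ha.2 h⟩)

lemma cmpC_injOn (S : Finset ℕ) {y y' : ℕ} (hy : y ∈ S) (hy' : y' ∈ S)
    (h : cmpC S y = cmpC S y') : y = y' := by
  rcases lt_trichotomy y y' with hlt|he|hlt
  · exact absurd h (cmpC_lt_cmpC S hy hlt).ne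
  · exact he
  · exact absurd h.symm (cmpC_lt_cmpC S hy' hlt).ne

lemma cmpC_zero (S : Finset ℕ) : cmpC S 0 = 0 := by
  simp [cmpC]
section Forward
variable {l : ℕ} {F D : Finset (ℕ × ℕ)}

lemma fwd_maps (hl : 1 ≤ l)
    (hF : IsYoungDiagram F) (hDF : D ⊆ F) (h00 : (0,0) ∈ D)
    (hxor : ∀ p ∈ D, p ≠ (0, 0) →
      Xor' (∃ q ∈ D, q.1 = p.1 ∧ q.2 < p.2) (∃ r ∈ D, r.2 = p.2 ∧ r.1 < p.1))
    (hrowcov : ∀ x : ℕ, (∃ y, (x, y) ∈ F) → ∃ y, (x, y) ∈ D)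
    (hcolcov : ∀ y : ℕ, (∃ x, (x, y) ∈ F) → ∃ x, (x, y) ∈ D)
    (hpos : ∀ x < l, 0 < rowLen F x) (heq : ∀ x < l, rowLen F x = rowLen F 0) :
    IsTLT ((F.filter (fun p => l - 1 ≤ p.1)).image (fun p => (p.1 - (l - 1), p.2)))
        (((D.filter (fun p => p.1 < l)).image Prod.snd).image (fun y => ((0 : ℕ), y)) ∪
          (D.filter (fun p => l ≤ p.1)).image (fun p => (p.1 - (l - 1), p.2))) ∧
      (((D.filter (fun p => p.1 < l)).image Prod.snd).image (fun y => ((0 : ℕ), y)) ∪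
          (D.filter (fun p => l ≤ p.1)).image (fun p => (p.1 - (l - 1), p.2))).card + (l - 1)
        = D.card ∧
      IsNAT ((D.filter (fun p => p.1 < l)).image
        (fun p => (p.1, cmpC ((D.filter (fun p => p.1 < l)).image Prod.snd) p.2))) ∧
      ((D.filter (fun p => p.1 < l)).image
          (fun p => (p.1, cmpC ((D.filter (fun p => p.1 < l)).image Prod.snd) p.2))).image
          Prod.fst = Finset.range l ∧
      ((((D.filter (fun p => p.1 < l)).image Prod.snd).image (fun y => ((0 : ℕ), y)) ∪
          (D.filter (fun p => l ≤ p.1)).image (fun p => (p.1 - (l - 1), p.2))).filter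
            (fun p => p.1 = 0)).card
        = (((D.filter (fun p => p.1 < l)).image
            (fun p => (p.1, cmpC ((D.filter (fun p => p.1 < l)).image Prod.snd) p.2))).image
            Prod.snd).card := by
  classical
  set R : Finset (ℕ × ℕ) := D.filter (fun p => p.1 < l) with hR
  set C : Finset ℕ := R.image Prod.snd with hCdef
  set m : ℕ := rowLen F 0 with hm
  set Fb : Finset (ℕ × ℕ) :=
    (F.filter (fun p => l - 1 ≤ p.1)).image (fun p => (p.1 - (l - 1), p.2)) with hFbdef
  set Db : Finset (ℕ × ℕ) :=
    C.image (fun y => ((0 : ℕ), y)) ∪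
      (D.filter (fun p => l ≤ p.1)).image (fun p => (p.1 - (l - 1), p.2)) with hDbdef
  set a : Finset (ℕ × ℕ) := R.image (fun p => (p.1, cmpC C p.2)) with hadef
  -- basic facts
  have hrect : ∀ x < l, ∀ y : ℕ, ((x, y) ∈ F ↔ y < m) := by
    intro x hx y
    rw [mem_iff_lt_rowLen hF, heq x hx]
  have hRmem : ∀ p : ℕ × ℕ, p ∈ R ↔ p ∈ D ∧ p.1 < l := by
    intro p; rw [hR, Finset.mem_filter]
  have hCm : ∀ y ∈ C, y < m := by
    intro y hy
    rw [hCdef, Finset.mem_image] at hy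
    obtain ⟨p, hp, rfl⟩ := hy
    rw [hRmem] at hp
    have := hDF hp.1
    have h2 : (p.1, p.2) ∈ F := this
    rw [hrect p.1 hp.2] at h2
    exact h2
  have hC0 : 0 ∈ C := by
    rw [hCdef, Finset.mem_image]
    exact ⟨(0,0), by rw [hRmem]; exact ⟨h00, hl⟩, rfl⟩
  have hCmem : ∀ y, y ∈ C ↔ ∃ x < l, (x, y) ∈ D := by
    intro y
    rw [hCdef, Finset.mem_image]
    constructor
    · rintro ⟨p, hp, rfl⟩; rw [hRmem] at hp; exact ⟨p.1, hp.2, hp.1⟩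
    · rintro ⟨x, hx, hxy⟩; exact ⟨(x,y), by rw [hRmem]; exact ⟨hxy, hx⟩, rfl⟩
  have hrowsR : ∀ x < l, ∃ y, (x, y) ∈ R := by
    intro x hx
    have h1 : (x, 0) ∈ F := by
      rw [hrect x hx]
      have h0 := hpos 0 hl
      have hm' := hm
      omega
    obtain ⟨y, hy⟩ := hrowcov x ⟨0, h1⟩
    exact ⟨y, by rw [hRmem]; exact ⟨hy, hx⟩⟩
  -- membership characterizations
  have hFbmem : ∀ u v : ℕ, ((u, v) ∈ Fb ↔ (u + (l - 1), v) ∈ F) := by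
    intro u v
    rw [hFbdef, Finset.mem_image]
    constructor
    · rintro ⟨p, hp, heq'⟩
      rw [Finset.mem_filter] at hp
      have h1 : p.1 - (l-1) = u := congrArg Prod.fst heq'
      have h2 : p.2 = v := congrArg Prod.snd heq'
      have : p.1 = u + (l-1) := by omega
      rw [← this, ← h2]
      exact hp.1
    · intro h
      exact ⟨(u + (l-1), v), by rw [Finset.mem_filter]; exact ⟨h, by simp⟩,
        by simp⟩
  have hDbmem : ∀ u v : ℕ, ((u, v) ∈ Db ↔ (u = 0 ∧ v ∈ C) ∨ (1 ≤ u ∧ (u + (l - 1), v) ∈ D)) := by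
    intro u v
    rw [hDbdef, Finset.mem_union, Finset.mem_image, Finset.mem_image]
    constructor
    · rintro (⟨y, hy, heq'⟩ | ⟨p, hp, heq'⟩)
      · left
        have h1 : (0 : ℕ) = u := congrArg Prod.fst heq'
        have h2 : y = v := congrArg Prod.snd heq'
        exact ⟨h1.symm, h2 ▸ hy⟩
      · right
        rw [Finset.mem_filter] at hp
        have h1 : p.1 - (l-1) = u := congrArg Prod.fst heq'
        have h2 : p.2 = v := congrArg Prod.snd heq'
        have h3 : p.1 = u + (l-1) := by omega
        refine ⟨by omega, ?_⟩
        rw [← h3, ← h2]; exact hp.1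
    · rintro (⟨rfl, hv⟩ | ⟨hu, hv⟩)
      · exact Or.inl ⟨v, hv, rfl⟩
      · refine Or.inr ⟨(u + (l-1), v), ?_, by simp⟩
        rw [Finset.mem_filter]
        exact ⟨hv, by omega⟩
  have hamem : ∀ u v : ℕ, ((u, v) ∈ a ↔ ∃ y, (u, y) ∈ R ∧ cmpC C y = v) := by
    intro u v
    rw [hadef, Finset.mem_image]
    constructor
    · rintro ⟨p, hp, heq'⟩
      have h1 : p.1 = u := congrArg Prod.fst heq'
      have h2 : cmpC C p.2 = v := congrArg Prod.snd heq'
      exact ⟨p.2, by rw [← h1]; exact hp, h2⟩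
    · rintro ⟨y, hy, hcv⟩
      exact ⟨(u, y), hy, by rw [← hcv]⟩
  -- the "smaller dotted column" fact
  have hsmaller : ∀ c ∈ C, c ≠ 0 → ∃ c' ∈ C, c' < c := by
    intro c hc hc0
    -- take the rect dot in column c with minimal first coordinate
    obtain ⟨p, hp, hpmin⟩ := Finset.exists_min_image (R.filter (fun q => q.2 = c)) Prod.fst
      (by
        rw [hCmem] at hc
        obtain ⟨x, hx, hxc⟩ := hc
        exact ⟨(x, c), by rw [Finset.mem_filter, hRmem]; exact ⟨⟨hxc, hx⟩, rfl⟩⟩)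
    rw [Finset.mem_filter, hRmem] at hp
    obtain ⟨⟨hpD, hpl⟩, hpc⟩ := hp
    have hpne : p ≠ (0, 0) := by
      intro h; rw [h] at hpc; exact hc0 hpc.symm
    rcases hxor p hpD hpne with ⟨⟨q, hq, hq1, hq2⟩, _⟩ | ⟨⟨r, hr, hr2, hr1⟩, _⟩
    · refine ⟨q.2, ?_, by omega⟩
      rw [hCmem]
      exact ⟨q.1, by omega, hq⟩
    · exfalso
      have : r ∈ R.filter (fun q => q.2 = c) := by
        rw [Finset.mem_filter, hRmem]
        exact ⟨⟨hr, by omega⟩, by omega⟩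
      have := hpmin r this
      omega
  -- Xor transfer to R
  have hxorR : ∀ p ∈ R, p ≠ (0,0) →
      Xor' (∃ q ∈ R, q.1 = p.1 ∧ q.2 < p.2) (∃ r ∈ R, r.2 = p.2 ∧ r.1 < p.1) := by
    intro p hp hpne
    rw [hRmem] at hp
    have hH : (∃ q ∈ R, q.1 = p.1 ∧ q.2 < p.2) ↔ (∃ q ∈ D, q.1 = p.1 ∧ q.2 < p.2) := by
      constructor
      · rintro ⟨q, hq, h⟩; rw [hRmem] at hq; exact ⟨q, hq.1, h⟩
      · rintro ⟨q, hq, h1, h2⟩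
        exact ⟨q, by rw [hRmem]; exact ⟨hq, by omega⟩, h1, h2⟩
    have hV : (∃ r ∈ R, r.2 = p.2 ∧ r.1 < p.1) ↔ (∃ r ∈ D, r.2 = p.2 ∧ r.1 < p.1) := by
      constructor
      · rintro ⟨r, hr, h⟩; rw [hRmem] at hr; exact ⟨r, hr.1, h⟩
      · rintro ⟨r, hr, h1, h2⟩
        exact ⟨r, by rw [hRmem]; exact ⟨hr, by omega⟩, h1, h2⟩
    rw [hH, hV]
    exact hxor p hp.1 hpne
  have h00R : (0,0) ∈ R := by rw [hRmem]; exact ⟨h00, hl⟩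
  have hfstR : R.image Prod.fst = Finset.range l := by
    apply Finset.Subset.antisymm
    · intro x hx
      rw [Finset.mem_image] at hx
      obtain ⟨p, hp, rfl⟩ := hx
      rw [hRmem] at hp
      simpa using hp.2
    · intro x hx
      rw [Finset.mem_range] at hx
      obtain ⟨y, hy⟩ := hrowsR x hx
      rw [Finset.mem_image]
      exact ⟨(x,y), hy, rfl⟩
  have hcardR : R.card + 1 = l + C.card := by
    have h := card_rows_cols R h00R hxorR
    rw [hfstR, Finset.card_range] at h
    exact h
  have hcardsplit : R.card + (D.filter (fun p => l ≤ p.1)).card = D.card := by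
    have h := Finset.card_filter_add_card_filter_not (s := D) (p := fun p => p.1 < l)
    have h2 : D.filter (fun p => ¬ p.1 < l) = D.filter (fun p => l ≤ p.1) := by
      apply Finset.filter_congr
      intro p _
      simp only [not_lt]
    rw [h2] at h
    exact h
  have hshiftinj : Set.InjOn (fun p : ℕ × ℕ => (p.1 - (l-1), p.2))
      ((D.filter (fun p => l ≤ p.1) : Finset (ℕ × ℕ)) : Set (ℕ × ℕ)) := by
    intro p hp q hq h
    simp only [Finset.coe_filter, Set.mem_setOf_eq] at hp hq
    have h0 : (p.1 - (l-1), p.2) = (q.1 - (l-1), q.2) := h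
    rw [Prod.mk.injEq] at h0
    have := hp.2; have := hq.2
    exact Prod.ext (by omega) h0.2
  have hinj0 : Function.Injective (fun y : ℕ => ((0:ℕ), y)) := by
    intro y y' h
    have h0 : ((0:ℕ), y) = ((0:ℕ), y') := h
    rw [Prod.mk.injEq] at h0
    exact h0.2
  have hdisj : Disjoint (C.image (fun y => ((0:ℕ), y)))
      ((D.filter (fun p => l ≤ p.1)).image (fun p => (p.1 - (l-1), p.2))) := by
    rw [Finset.disjoint_left]
    rintro p hp hp'
    rw [Finset.mem_image] at hp hp'
    obtain ⟨y, _, rfl⟩ := hp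
    obtain ⟨q, hq, hq'⟩ := hp'
    rw [Finset.mem_filter] at hq
    have h1 : q.1 - (l-1) = 0 := congrArg Prod.fst hq'
    have := hq.2
    omega
  have hDbcard : Db.card = C.card + (D.filter (fun p => l ≤ p.1)).card := by
    rw [hDbdef, Finset.card_union_of_disjoint hdisj, Finset.card_image_of_injective _ hinj0,
      Finset.card_image_of_injOn hshiftinj]
  -- a is an image under an injective map
  have hp2C : ∀ p ∈ R, p.2 ∈ C := by
    intro p hp
    rw [hCdef]
    exact Finset.mem_image_of_mem _ hp
  have hamem' : ∀ pb ∈ a, ∃ p ∈ R, pb = (p.1, cmpC C p.2) := by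
    intro pb hpb
    rw [hadef, Finset.mem_image] at hpb
    obtain ⟨p, hp, h⟩ := hpb
    exact ⟨p, hp, h.symm⟩
  have hxorA : ∀ pb ∈ a, pb ≠ (0, 0) →
      Xor' (∃ q ∈ a, q.1 = pb.1 ∧ q.2 < pb.2) (∃ r ∈ a, r.2 = pb.2 ∧ r.1 < pb.1) := by
    intro pb hpb hne
    obtain ⟨p, hp, rfl⟩ := hamem' pb hpb
    have hpne : p ≠ (0,0) := by
      rintro rfl
      exact hne (by simp [cmpC_zero])
    have hH : (∃ q ∈ a, q.1 = p.1 ∧ q.2 < cmpC C p.2) ↔ (∃ q ∈ R, q.1 = p.1 ∧ q.2 < p.2) := by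
      constructor
      · rintro ⟨qb, hqb, h1, h2⟩
        obtain ⟨q, hq, rfl⟩ := hamem' qb hqb
        refine ⟨q, hq, h1, ?_⟩
        by_contra hc
        push_neg at hc
        exact absurd (cmpC_mono C hc) (by omega)
      · rintro ⟨q, hq, h1, h2⟩
        refine ⟨(q.1, cmpC C q.2), ?_, h1, cmpC_lt_cmpC C (hp2C q hq) h2⟩
        rw [hadef, Finset.mem_image]
        exact ⟨q, hq, rfl⟩
    have hV : (∃ r ∈ a, r.2 = cmpC C p.2 ∧ r.1 < p.1) ↔ (∃ r ∈ R, r.2 = p.2 ∧ r.1 < p.1) := by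
      constructor
      · rintro ⟨rb, hrb, h2, h1⟩
        obtain ⟨r, hr, rfl⟩ := hamem' rb hrb
        exact ⟨r, hr, cmpC_injOn C (hp2C r hr) (hp2C p hp) h2, h1⟩
      · rintro ⟨r, hr, h2, h1⟩
        refine ⟨(r.1, cmpC C r.2), ?_, by rw [h2], h1⟩
        rw [hadef, Finset.mem_image]
        exact ⟨r, hr, rfl⟩
    show Xor' (∃ q ∈ a, q.1 = p.1 ∧ q.2 < cmpC C p.2) (∃ r ∈ a, r.2 = cmpC C p.2 ∧ r.1 < p.1)
    rw [hH, hV]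
    exact hxorR p hp hpne
  have hafst : a.image Prod.fst = Finset.range l := by
    rw [hadef, Finset.image_image]
    exact hfstR
  have hasnd : a.image Prod.snd = Finset.range C.card := by
    rw [hadef, Finset.image_image]
    have h : R.image (Prod.snd ∘ fun p => (p.1, cmpC C p.2)) = (R.image Prod.snd).image (cmpC C) := by
      rw [Finset.image_image]
      rfl
    rw [h, ← hCdef, image_cmpC]
  have h00a : (0, 0) ∈ a := by
    rw [hadef, Finset.mem_image]
    exact ⟨(0,0), h00R, by simp [cmpC_zero]⟩
  have hnat3 : ∀ p ∈ a, (∀ x' < p.1, ∃ q ∈ a, q.1 = x') ∧ (∀ y' < p.2, ∃ q ∈ a, q.2 = y') := by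
    intro pb hpb
    constructor
    · intro x' hx'
      have h1 : pb.1 ∈ a.image Prod.fst := Finset.mem_image_of_mem _ hpb
      rw [hafst, Finset.mem_range] at h1
      have h2 : x' ∈ a.image Prod.fst := by rw [hafst, Finset.mem_range]; omega
      rw [Finset.mem_image] at h2
      obtain ⟨q, hq, hq'⟩ := h2
      exact ⟨q, hq, hq'⟩
    · intro y' hy'
      have h1 : pb.2 ∈ a.image Prod.snd := Finset.mem_image_of_mem _ hpb
      rw [hasnd, Finset.mem_range] at h1
      have h2 : y' ∈ a.image Prod.snd := by rw [hasnd, Finset.mem_range]; omega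
      rw [Finset.mem_image] at h2
      obtain ⟨q, hq, hq'⟩ := h2
      exact ⟨q, hq, hq'⟩
  have hfilterDb : Db.filter (fun p => p.1 = 0) = C.image (fun y => ((0:ℕ), y)) := by
    ext ⟨u, v⟩
    simp only [Finset.mem_filter, hDbmem, Finset.mem_image]
    constructor
    · rintro ⟨(⟨rfl, hv⟩ | ⟨hu, _⟩), hu0⟩
      · exact ⟨v, hv, rfl⟩
      · exact absurd hu0 (by omega)
    · rintro ⟨y, hy, hy'⟩
      have h1 : (0:ℕ) = u := congrArg Prod.fst hy'
      have h2 : y = v := congrArg Prod.snd hy'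
      subst h2
      exact ⟨Or.inl ⟨h1.symm, hy⟩, h1.symm⟩
  refine ⟨⟨?_, ?_, ?_, ?_, ?_, ?_⟩, ?_, ⟨h00a, hxorA, hnat3⟩, hafst, ?_⟩
  · -- Young
    rintro ⟨u, v⟩ hp x' hx' y' hy'
    rw [hFbmem] at hp
    rw [hFbmem]
    exact hF (u + (l-1), v) hp (x' + (l-1)) (by simp at hx' ⊢; omega) y' hy'
  · -- Db ⊆ Fb
    rintro ⟨u, v⟩ hp
    rw [hDbmem] at hp
    rw [hFbmem]
    rcases hp with ⟨rfl, hv⟩ | ⟨hu, hv⟩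
    · have h1 : 0 + (l-1) = l - 1 := by omega
      rw [h1, hrect (l-1) (by omega)]
      exact hCm v hv
    · exact hDF hv
  · -- root
    rw [hDbmem]
    exact Or.inl ⟨rfl, hC0⟩
  · -- Xor for Db
    rintro ⟨u, v⟩ hp hpne
    rw [hDbmem] at hp
    rcases hp with ⟨rfl, hv⟩ | ⟨hu, hd⟩
    · have hv0 : v ≠ 0 := by
        rintro rfl
        exact hpne rfl
      refine Or.inl ⟨?_, ?_⟩
      · obtain ⟨c', hc', hlt⟩ := hsmaller v hv hv0
        exact ⟨(0, c'), by rw [hDbmem]; exact Or.inl ⟨rfl, hc'⟩, rfl, hlt⟩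
      · rintro ⟨r, hr, hr2, hr1⟩
        exact absurd hr1 (Nat.not_lt_zero _)
    · have hHiff : (∃ q ∈ Db, q.1 = u ∧ q.2 < v) ↔ (∃ q ∈ D, q.1 = u + (l-1) ∧ q.2 < v) := by
        constructor
        · rintro ⟨⟨qu, qv⟩, hq, h1, h2⟩
          rw [hDbmem] at hq
          have h1' : qu = u := h1
          have h2' : qv < v := h2
          rcases hq with ⟨rfl, _⟩ | ⟨_, hq⟩
          · omega
          · refine ⟨(qu + (l-1), qv), hq, ?_, h2'⟩
            show qu + (l-1) = u + (l-1)
            omega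
        · rintro ⟨⟨qu, qv⟩, hq, h1, h2⟩
          have h1' : qu = u + (l-1) := h1
          have h2' : qv < v := h2
          refine ⟨(u, qv), ?_, rfl, h2'⟩
          rw [hDbmem]
          right
          refine ⟨hu, ?_⟩
          rw [show u + (l-1) = qu by omega]
          exact hq
      have hViff : (∃ r ∈ Db, r.2 = v ∧ r.1 < u) ↔ (∃ r ∈ D, r.2 = v ∧ r.1 < u + (l-1)) := by
        constructor
        · rintro ⟨⟨ru, rv⟩, hr, h2, h1⟩
          rw [hDbmem] at hr
          have h1' : ru < u := h1
          have h2' : rv = v := h2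
          rcases hr with ⟨rfl, hv'⟩ | ⟨hru, hr⟩
          · rw [hCmem] at hv'
            obtain ⟨x'', hx'', hd'⟩ := hv'
            refine ⟨(x'', rv), hd', h2', ?_⟩
            show x'' < u + (l-1)
            omega
          · refine ⟨(ru + (l-1), rv), hr, h2', ?_⟩
            show ru + (l-1) < u + (l-1)
            omega
        · rintro ⟨⟨ru, rv⟩, hr, h2, h1⟩
          have h1' : ru < u + (l-1) := h1
          have h2' : rv = v := h2
          by_cases hrl : ru < l
          · have hvC : v ∈ C := by
              rw [hCmem]
              refine ⟨ru, hrl, ?_⟩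
              rw [← h2']
              exact hr
            refine ⟨(0, v), ?_, rfl, ?_⟩
            · rw [hDbmem]
              exact Or.inl ⟨rfl, hvC⟩
            · show 0 < u
              omega
          · refine ⟨(ru - (l-1), v), ?_, rfl, ?_⟩
            · rw [hDbmem]
              right
              refine ⟨by omega, ?_⟩
              rw [show ru - (l-1) + (l-1) = ru by omega, ← h2']
              exact hr
            · show ru - (l-1) < u
              omega
      show Xor' (∃ q ∈ Db, q.1 = u ∧ q.2 < v) (∃ r ∈ Db, r.2 = v ∧ r.1 < u)
      rw [hHiff, hViff]
      have hne2 : ((u + (l-1) : ℕ), v) ≠ ((0 : ℕ), (0 : ℕ)) := by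
        rw [Ne, Prod.mk.injEq]
        rintro ⟨h1, _⟩
        omega
      exact hxor (u + (l-1), v) hd hne2
  · -- row coverage
    intro x' hx'
    obtain ⟨y, hy⟩ := hx'
    rcases Nat.eq_zero_or_pos x' with rfl | hx'pos
    · exact ⟨0, by rw [hDbmem]; exact Or.inl ⟨rfl, hC0⟩⟩
    · rw [hFbmem] at hy
      obtain ⟨y', hy'⟩ := hrowcov (x' + (l-1)) ⟨y, hy⟩
      refine ⟨y', ?_⟩
      rw [hDbmem]
      exact Or.inr ⟨hx'pos, hy'⟩
  · -- column coverage
    intro y hy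
    obtain ⟨x', hx'⟩ := hy
    rw [hFbmem] at hx'
    obtain ⟨x'', hx''⟩ := hcolcov y ⟨x' + (l-1), hx'⟩
    by_cases hxl : x'' < l
    · refine ⟨0, ?_⟩
      rw [hDbmem]
      exact Or.inl ⟨rfl, by rw [hCmem]; exact ⟨x'', hxl, hx''⟩⟩
    · refine ⟨x'' - (l-1), ?_⟩
      rw [hDbmem]
      right
      refine ⟨by omega, ?_⟩
      have h3 : x'' - (l-1) + (l-1) = x'' := by omega
      rw [h3]
      exact hx''
  · -- card
    omega
  · -- final card condition
    rw [hfilterDb, hasnd, Finset.card_range,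
      Finset.card_image_of_injective _ hinj0]

end Forward
section Backward
variable {l : ℕ} {G E a : Finset (ℕ × ℕ)}

lemma bwd_maps (hl : 1 ≤ l)
    (hG : IsYoungDiagram G) (hEG : E ⊆ G) (h00E : (0,0) ∈ E)
    (hxorE : ∀ p ∈ E, p ≠ (0, 0) →
      Xor' (∃ q ∈ E, q.1 = p.1 ∧ q.2 < p.2) (∃ r ∈ E, r.2 = p.2 ∧ r.1 < p.1))
    (hrowcovG : ∀ x : ℕ, (∃ y, (x, y) ∈ G) → ∃ y, (x, y) ∈ E)
    (hcolcovG : ∀ y : ℕ, (∃ x, (x, y) ∈ G) → ∃ x, (x, y) ∈ E)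
    (h00a : (0, 0) ∈ a)
    (hxora : ∀ p ∈ a, p ≠ (0, 0) →
      Xor' (∃ q ∈ a, q.1 = p.1 ∧ q.2 < p.2) (∃ r ∈ a, r.2 = p.2 ∧ r.1 < p.1))
    (hnat3a : ∀ p ∈ a, (∀ x' < p.1, ∃ q ∈ a, q.1 = x') ∧ (∀ y' < p.2, ∃ q ∈ a, q.2 = y'))
    (hfsta : a.image Prod.fst = Finset.range l)
    (hcardcond : (E.filter (fun p => p.1 = 0)).card = (a.image Prod.snd).card) :
    IsTLT ((Finset.range (l - 1)) ×ˢ (Finset.range (rowLen G 0)) ∪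
        G.image (fun p => (p.1 + (l - 1), p.2)))
      (a.image (fun p => (p.1, decC ((E.filter (fun p => p.1 = 0)).image Prod.snd) p.2)) ∪
        (E.filter (fun p => 1 ≤ p.1)).image (fun p => (p.1 + (l - 1), p.2))) ∧
    (a.image (fun p => (p.1, decC ((E.filter (fun p => p.1 = 0)).image Prod.snd) p.2)) ∪
        (E.filter (fun p => 1 ≤ p.1)).image (fun p => (p.1 + (l - 1), p.2))).card
      = E.card + (l - 1) ∧
    (∀ x < l, 0 < rowLen ((Finset.range (l - 1)) ×ˢ (Finset.range (rowLen G 0)) ∪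
        G.image (fun p => (p.1 + (l - 1), p.2))) x) ∧
    (∀ x < l, rowLen ((Finset.range (l - 1)) ×ˢ (Finset.range (rowLen G 0)) ∪
        G.image (fun p => (p.1 + (l - 1), p.2))) x
      = rowLen ((Finset.range (l - 1)) ×ˢ (Finset.range (rowLen G 0)) ∪
        G.image (fun p => (p.1 + (l - 1), p.2))) 0) := by
  classical
  set m : ℕ := rowLen G 0 with hm
  set S : Finset ℕ := (E.filter (fun p => p.1 = 0)).image Prod.snd with hSdef
  set F' : Finset (ℕ × ℕ) :=
    (Finset.range (l - 1)) ×ˢ (Finset.range m) ∪ G.image (fun p => (p.1 + (l - 1), p.2))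
    with hF'def
  set D' : Finset (ℕ × ℕ) :=
    a.image (fun p => (p.1, decC S p.2)) ∪
      (E.filter (fun p => 1 ≤ p.1)).image (fun p => (p.1 + (l - 1), p.2)) with hD'def
  have hmemG : ∀ x y : ℕ, ((x, y) ∈ G ↔ y < rowLen G x) := mem_iff_lt_rowLen hG
  have hm0 : 0 < m := by
    have := (hmemG 0 0).1 (hEG h00E)
    omega
  have hrowG_le : ∀ x, rowLen G x ≤ m := by
    intro x
    rw [hm]
    exact rowLen_anti hG (Nat.zero_le x)
  have hSmem : ∀ y : ℕ, y ∈ S ↔ (0, y) ∈ E := by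
    intro y
    rw [hSdef, Finset.mem_image]
    constructor
    · rintro ⟨p, hp, rfl⟩
      rw [Finset.mem_filter] at hp
      have : (p.1, p.2) ∈ E := hp.1
      rw [hp.2] at this
      exact this
    · intro h
      exact ⟨(0, y), by rw [Finset.mem_filter]; exact ⟨h, rfl⟩, rfl⟩
  have h0S : 0 ∈ S := (hSmem 0).2 h00E
  have hSm : ∀ y ∈ S, y < m := by
    intro y hy
    rw [hSmem] at hy
    have := (hmemG 0 y).1 (hEG hy)
    omega
  have hScard : S.card = (E.filter (fun p => p.1 = 0)).card := by
    rw [hSdef]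
    apply Finset.card_image_of_injOn
    intro p hp q hq hpq
    simp only [Finset.coe_filter, Set.mem_setOf_eq] at hp hq
    exact Prod.ext (hp.2.trans hq.2.symm) hpq
  have hasnd : a.image Prod.snd = Finset.range S.card := by
    have hdc : ∀ y ∈ a.image Prod.snd, ∀ b ≤ y, b ∈ a.image Prod.snd := by
      intro y hy b hb
      rcases Nat.eq_or_lt_of_le hb with rfl | hblt
      · exact hy
      · rw [Finset.mem_image] at hy
        obtain ⟨p, hp, rfl⟩ := hy
        obtain ⟨q, hq, hq'⟩ := (hnat3a p hp).2 b hblt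
        rw [Finset.mem_image]
        exact ⟨q, hq, hq'⟩
    have h := downclosed_eq_range _ hdc
    rw [h, hScard, hcardcond]
  have hp2k : ∀ p ∈ a, p.2 < S.card := by
    intro p hp
    have : p.2 ∈ a.image Prod.snd := Finset.mem_image_of_mem _ hp
    rwa [hasnd, Finset.mem_range] at this
  have hp1l : ∀ p ∈ a, p.1 < l := by
    intro p hp
    have : p.1 ∈ a.image Prod.fst := Finset.mem_image_of_mem _ hp
    rwa [hfsta, Finset.mem_range] at this
  have hdec0 : decC S 0 = 0 := by
    have := decC_cmpC S h0S
    rwa [cmpC_zero] at this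
  have hdecmem : ∀ j < S.card, decC S j ∈ S := fun j hj => decC_mem S hj
  have hdecinj : ∀ i < S.card, ∀ j < S.card, decC S i = decC S j → i = j := by
    intro i hi j hj h
    rcases lt_trichotomy i j with hlt | he | hlt
    · exact absurd h (decC_lt_decC S hlt hj).ne
    · exact he
    · exact absurd h.symm (decC_lt_decC S hlt hi).ne
  have hsndex : ∀ c < S.card, ∃ q ∈ a, q.2 = c := by
    intro c hc
    have : c ∈ a.image Prod.snd := by rw [hasnd, Finset.mem_range]; exact hc
    rw [Finset.mem_image] at this
    obtain ⟨q, hq, hq'⟩ := this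
    exact ⟨q, hq, hq'⟩
  -- membership characterizations
  have hF'mem : ∀ u v : ℕ,
      ((u, v) ∈ F' ↔ (u < l - 1 ∧ v < m) ∨ (l - 1 ≤ u ∧ (u - (l - 1), v) ∈ G)) := by
    intro u v
    rw [hF'def, Finset.mem_union, Finset.mem_product, Finset.mem_image]
    constructor
    · rintro (⟨h1, h2⟩ | ⟨p, hp, hp'⟩)
      · rw [Finset.mem_range] at h1 h2
        exact Or.inl ⟨h1, h2⟩
      · have e1 : p.1 + (l-1) = u := congrArg Prod.fst hp'
        have e2 : p.2 = v := congrArg Prod.snd hp'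
        right
        refine ⟨by omega, ?_⟩
        rw [show u - (l-1) = p.1 by omega, ← e2]
        exact hp
    · rintro (⟨h1, h2⟩ | ⟨h1, h2⟩)
      · exact Or.inl ⟨Finset.mem_range.2 h1, Finset.mem_range.2 h2⟩
      · right
        refine ⟨(u - (l-1), v), h2, ?_⟩
        show (u - (l-1) + (l-1), v) = (u, v)
        rw [Prod.mk.injEq]
        exact ⟨by omega, rfl⟩
  have hD'mem : ∀ u v : ℕ,
      ((u, v) ∈ D' ↔ (u < l ∧ ∃ c, (u, c) ∈ a ∧ decC S c = v) ∨
        (l ≤ u ∧ (u - (l - 1), v) ∈ E)) := by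
    intro u v
    rw [hD'def, Finset.mem_union, Finset.mem_image, Finset.mem_image]
    constructor
    · rintro (⟨p, hp, hp'⟩ | ⟨p, hp, hp'⟩)
      · have e1 : p.1 = u := congrArg Prod.fst hp'
        have e2 : decC S p.2 = v := congrArg Prod.snd hp'
        left
        refine ⟨by rw [← e1]; exact hp1l p hp, p.2, ?_, e2⟩
        rw [← e1]
        exact hp
      · rw [Finset.mem_filter] at hp
        have e1 : p.1 + (l-1) = u := congrArg Prod.fst hp'
        have e2 : p.2 = v := congrArg Prod.snd hp'
        have := hp.2
        right
        refine ⟨by omega, ?_⟩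
        rw [show u - (l-1) = p.1 by omega, ← e2]
        exact hp.1
    · rintro (⟨hu, c, hc, hc'⟩ | ⟨hu, hE⟩)
      · exact Or.inl ⟨(u, c), hc, by rw [Prod.mk.injEq]; exact ⟨rfl, hc'⟩⟩
      · right
        refine ⟨(u - (l-1), v), ?_, ?_⟩
        · rw [Finset.mem_filter]
          exact ⟨hE, by omega⟩
        · rw [Prod.mk.injEq]
          exact ⟨by omega, rfl⟩
  -- row lengths of F'
  have hrowF' : ∀ x < l, ∀ v : ℕ, ((x, v) ∈ F' ↔ v < m) := by
    intro x hx v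
    rw [hF'mem]
    constructor
    · rintro (⟨_, h2⟩ | ⟨h1, h2⟩)
      · exact h2
      · rw [hmemG] at h2
        have := hrowG_le (x - (l-1))
        omega
    · intro hv
      by_cases hxl : x < l - 1
      · exact Or.inl ⟨hxl, hv⟩
      · right
        refine ⟨by omega, ?_⟩
        rw [hmemG]
        have hx0 : x - (l-1) = 0 := by omega
        rw [hx0, ← hm]
        exact hv
  -- Young
  have hyoung : IsYoungDiagram F' := by
    rintro ⟨u, v⟩ hp x' hx' y' hy'
    simp only at hx' hy'
    rw [hF'mem] at hp
    rw [hF'mem]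
    rcases hp with ⟨h1, h2⟩ | ⟨h1, h2⟩
    · exact Or.inl ⟨by omega, by omega⟩
    · by_cases hxl : x' < l - 1
      · left
        refine ⟨hxl, ?_⟩
        rw [hmemG] at h2
        have := hrowG_le (u - (l-1))
        omega
      · right
        refine ⟨by omega, ?_⟩
        exact hG _ h2 (x' - (l-1)) (by simp only; omega) y' hy'
  refine ⟨⟨hyoung, ?_, ?_, ?_, ?_, ?_⟩, ?_, ?_, ?_⟩
  · -- D' ⊆ F'
    rintro ⟨u, v⟩ hp
    rw [hD'mem] at hp
    rw [hF'mem]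
    rcases hp with ⟨hu, c, hc, hc'⟩ | ⟨hu, hE⟩
    · have hck : c < S.card := hp2k (u, c) hc
      have hvS : v ∈ S := by rw [← hc']; exact hdecmem c hck
      have hvm : v < m := hSm v hvS
      by_cases hxl : u < l - 1
      · exact Or.inl ⟨hxl, hvm⟩
      · right
        refine ⟨by omega, ?_⟩
        rw [hmemG, show u - (l-1) = 0 by omega, ← hm]
        exact hvm
    · right
      exact ⟨by omega, hEG hE⟩
  · -- root
    rw [hD'mem]
    exact Or.inl ⟨hl, 0, h00a, hdec0⟩
  · -- Xor for D'
    rintro ⟨u, v⟩ hp hpne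
    rw [hD'mem] at hp
    rcases hp with ⟨hu, c, hc, hc'⟩ | ⟨hu, hE⟩
    · have hck : c < S.card := hp2k (u, c) hc
      have hcne : (u, c) ≠ ((0 : ℕ), (0 : ℕ)) := by
        rintro h
        rw [Prod.mk.injEq] at h
        apply hpne
        rw [Prod.mk.injEq]
        refine ⟨h.1, ?_⟩
        rw [← hc', h.2, hdec0]
      have hH : (∃ q ∈ D', q.1 = u ∧ q.2 < v) ↔ (∃ q ∈ a, q.1 = u ∧ q.2 < c) := by
        constructor
        · rintro ⟨⟨qu, qv⟩, hq, h1, h2⟩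
          have h1' : qu = u := h1
          have h2' : qv < v := h2
          rw [hD'mem] at hq
          rcases hq with ⟨_, c', hc'a, hc'd⟩ | ⟨hql, _⟩
          · have hc'k : c' < S.card := hp2k (qu, c') hc'a
            refine ⟨(qu, c'), hc'a, h1', ?_⟩
            show c' < c
            by_contra hcc
            push_neg at hcc
            rcases Nat.eq_or_lt_of_le hcc with rfl | hlt
            · omega
            · have := decC_lt_decC S hlt hc'k
              omega
          · omega
        · rintro ⟨⟨qu, qv⟩, hq, h1, h2⟩
          have h1' : qu = u := h1
          have h2' : qv < c := h2
          refine ⟨(qu, decC S qv), ?_, h1', ?_⟩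
          · rw [hD'mem]
            exact Or.inl ⟨by omega, qv, hq, rfl⟩
          · show decC S qv < v
            rw [← hc']
            exact decC_lt_decC S h2' hck
      have hV : (∃ r ∈ D', r.2 = v ∧ r.1 < u) ↔ (∃ r ∈ a, r.2 = c ∧ r.1 < u) := by
        constructor
        · rintro ⟨⟨ru, rv⟩, hr, h2, h1⟩
          have h1' : ru < u := h1
          have h2' : rv = v := h2
          rw [hD'mem] at hr
          rcases hr with ⟨_, c', hc'a, hc'd⟩ | ⟨hrl, _⟩
          · have hc'k : c' < S.card := hp2k (ru, c') hc'a
            refine ⟨(ru, c'), hc'a, ?_, h1'⟩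
            show c' = c
            apply hdecinj c' hc'k c hck
            rw [hc'd, h2', hc']
          · omega
        · rintro ⟨⟨ru, rv⟩, hr, h2, h1⟩
          have h1' : ru < u := h1
          have h2' : rv = c := h2
          refine ⟨(ru, decC S rv), ?_, ?_, h1'⟩
          · rw [hD'mem]
            exact Or.inl ⟨by omega, rv, hr, rfl⟩
          · show decC S rv = v
            rw [h2', hc']
      show Xor' (∃ q ∈ D', q.1 = u ∧ q.2 < v) (∃ r ∈ D', r.2 = v ∧ r.1 < u)
      rw [hH, hV]
      exact hxora (u, c) hc hcne
    · have hx1 : 1 ≤ u - (l-1) := by omega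
      have hEne : ((u - (l-1) : ℕ), v) ≠ ((0 : ℕ), (0 : ℕ)) := by
        rw [Ne, Prod.mk.injEq]
        rintro ⟨h1, _⟩
        omega
      have hH : (∃ q ∈ D', q.1 = u ∧ q.2 < v) ↔ (∃ q ∈ E, q.1 = u - (l-1) ∧ q.2 < v) := by
        constructor
        · rintro ⟨⟨qu, qv⟩, hq, h1, h2⟩
          have h1' : qu = u := h1
          have h2' : qv < v := h2
          rw [hD'mem] at hq
          rcases hq with ⟨hql, _, _, _⟩ | ⟨hql, hqE⟩
          · omega
          · refine ⟨(qu - (l-1), qv), hqE, ?_, h2'⟩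
            show qu - (l-1) = u - (l-1)
            omega
        · rintro ⟨⟨qu, qv⟩, hq, h1, h2⟩
          have h1' : qu = u - (l-1) := h1
          have h2' : qv < v := h2
          refine ⟨(u, qv), ?_, rfl, h2'⟩
          rw [hD'mem]
          right
          refine ⟨hu, ?_⟩
          rw [show u - (l-1) = qu by omega]
          exact hq
      have hV : (∃ r ∈ D', r.2 = v ∧ r.1 < u) ↔ (∃ r ∈ E, r.2 = v ∧ r.1 < u - (l-1)) := by
        constructor
        · rintro ⟨⟨ru, rv⟩, hr, h2, h1⟩
          have h1' : ru < u := h1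
          have h2' : rv = v := h2
          rw [hD'mem] at hr
          rcases hr with ⟨hrl, c', hc'a, hc'd⟩ | ⟨hrl, hrE⟩
          · have hc'k : c' < S.card := hp2k (ru, c') hc'a
            have hvS : v ∈ S := by
              rw [← h2', ← hc'd]
              exact hdecmem c' hc'k
            rw [hSmem] at hvS
            exact ⟨(0, v), hvS, rfl, by omega⟩
          · refine ⟨(ru - (l-1), rv), hrE, h2', ?_⟩
            show ru - (l-1) < u - (l-1)
            omega
        · rintro ⟨⟨ru, rv⟩, hr, h2, h1⟩
          have h1' : ru < u - (l-1) := h1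
          have h2' : rv = v := h2
          rcases Nat.eq_zero_or_pos ru with rfl | hru
          · have hvS : v ∈ S := by
              rw [hSmem, ← h2']
              exact hr
            obtain ⟨q, hq, hq'⟩ := hsndex (cmpC S v) (cmpC_lt_card S hvS)
            refine ⟨(q.1, decC S (cmpC S v)), ?_, ?_, ?_⟩
            · rw [hD'mem]
              left
              refine ⟨hp1l q hq, q.2, ?_, by rw [hq']⟩
              rw [show (q.1, q.2) = q from rfl]
              exact hq
            · show decC S (cmpC S v) = v
              exact decC_cmpC S hvS
            · show q.1 < u
              have := hp1l q hq
              omega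
          · refine ⟨(ru + (l-1), rv), ?_, h2', ?_⟩
            · rw [hD'mem]
              right
              refine ⟨by omega, ?_⟩
              rw [show ru + (l-1) - (l-1) = ru by omega]
              exact hr
            · show ru + (l-1) < u
              omega
      show Xor' (∃ q ∈ D', q.1 = u ∧ q.2 < v) (∃ r ∈ D', r.2 = v ∧ r.1 < u)
      rw [hH, hV]
      exact hxorE (u - (l-1), v) hE hEne
  · -- row coverage
    intro x hx
    obtain ⟨y, hy⟩ := hx
    by_cases hxl : x < l
    · have : x ∈ a.image Prod.fst := by rw [hfsta, Finset.mem_range]; exact hxl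
      rw [Finset.mem_image] at this
      obtain ⟨p, hp, hp'⟩ := this
      refine ⟨decC S p.2, ?_⟩
      rw [hD'mem]
      left
      refine ⟨hxl, p.2, ?_, rfl⟩
      rw [show (x, p.2) = p from Prod.ext hp'.symm rfl]
      exact hp
    · rw [hF'mem] at hy
      rcases hy with ⟨h1, _⟩ | ⟨h1, h2⟩
      · omega
      · obtain ⟨y', hy'⟩ := hrowcovG (x - (l-1)) ⟨y, h2⟩
        refine ⟨y', ?_⟩
        rw [hD'mem]
        right
        exact ⟨by omega, hy'⟩
  · -- column coverage
    intro y hy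
    obtain ⟨x, hx⟩ := hy
    have hym : y < m := by
      rw [hF'mem] at hx
      rcases hx with ⟨_, h2⟩ | ⟨_, h2⟩
      · exact h2
      · rw [hmemG] at h2
        have := hrowG_le (x - (l-1))
        omega
    obtain ⟨x'', hx''⟩ := hcolcovG y ⟨0, by rw [hmemG, ← hm]; exact hym⟩
    rcases Nat.eq_zero_or_pos x'' with rfl | hx''pos
    · have hyS : y ∈ S := by rw [hSmem]; exact hx''
      obtain ⟨q, hq, hq'⟩ := hsndex (cmpC S y) (cmpC_lt_card S hyS)
      refine ⟨q.1, ?_⟩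
      rw [hD'mem]
      left
      refine ⟨hp1l q hq, q.2, ?_, ?_⟩
      · rw [show (q.1, q.2) = q from rfl]
        exact hq
      · rw [hq']
        exact decC_cmpC S hyS
    · refine ⟨x'' + (l-1), ?_⟩
      rw [hD'mem]
      right
      refine ⟨by omega, ?_⟩
      rw [show x'' + (l-1) - (l-1) = x'' by omega]
      exact hx''
  · -- card
    have hainj : Set.InjOn (fun p : ℕ × ℕ => (p.1, decC S p.2)) (a : Set (ℕ × ℕ)) := by
      intro p hp q hq h
      rw [Finset.mem_coe] at hp hq
      have h0 : (p.1, decC S p.2) = (q.1, decC S q.2) := h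
      rw [Prod.mk.injEq] at h0
      exact Prod.ext h0.1 (hdecinj _ (hp2k p hp) _ (hp2k q hq) h0.2)
    have hshinj : Set.InjOn (fun p : ℕ × ℕ => (p.1 + (l-1), p.2))
        ((E.filter (fun p => 1 ≤ p.1) : Finset (ℕ × ℕ)) : Set (ℕ × ℕ)) := by
      intro p hp q hq h
      have h0 : (p.1 + (l-1), p.2) = (q.1 + (l-1), q.2) := h
      rw [Prod.mk.injEq] at h0
      exact Prod.ext (by omega) h0.2
    have hdisj : Disjoint (a.image (fun p => (p.1, decC S p.2)))
        ((E.filter (fun p => 1 ≤ p.1)).image (fun p => (p.1 + (l - 1), p.2))) := by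
      rw [Finset.disjoint_left]
      rintro p hp hp'
      rw [Finset.mem_image] at hp hp'
      obtain ⟨q, hq, rfl⟩ := hp
      obtain ⟨r, hr, hr'⟩ := hp'
      rw [Finset.mem_filter] at hr
      have e1 : r.1 + (l-1) = q.1 := congrArg Prod.fst hr'
      have := hp1l q hq
      have := hr.2
      omega
    have hacard : a.card + 1 = l + S.card := by
      have h := card_rows_cols a h00a hxora
      rw [hfsta, hasnd, Finset.card_range, Finset.card_range] at h
      exact h
    have hEsplit : (E.filter (fun p => p.1 = 0)).card + (E.filter (fun p => 1 ≤ p.1)).card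
        = E.card := by
      have h := Finset.card_filter_add_card_filter_not (s := E) (p := fun p => p.1 = 0)
      have h2 : E.filter (fun p => ¬ p.1 = 0) = E.filter (fun p => 1 ≤ p.1) := by
        apply Finset.filter_congr
        intro p _
        omega
      rw [h2] at h
      exact h
    rw [hD'def, Finset.card_union_of_disjoint hdisj, Finset.card_image_of_injOn hainj,
      Finset.card_image_of_injOn hshinj]
    omega
  · -- row positivity
    intro x hx
    have h := (mem_iff_lt_rowLen hyoung x 0).1 ((hrowF' x hx 0).2 hm0)
    omega
  · -- row equality
    intro x hx
    have hchar : ∀ z < l, rowLen F' z = m := by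
      intro z hz
      have h1 := mem_iff_lt_rowLen hyoung z
      by_contra hne
      rcases Nat.lt_or_ge (rowLen F' z) m with hlt | hge
      · have := (h1 (rowLen F' z)).1 ((hrowF' z hz _).2 hlt)
        omega
      · have hmlt : m < rowLen F' z := by omega
        have := (hrowF' z hz m).1 ((h1 m).2 hmlt)
        omega
    rw [hchar x hx, hchar 0 (by omega)]

end Backward
section Shift

lemma mem_shift_down {A : Finset (ℕ × ℕ)} {c t u v : ℕ} (hct : c ≤ t) :
    ((u, v) ∈ (A.filter (fun p => t ≤ p.1)).image (fun p => (p.1 - c, p.2)) ↔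
      t ≤ u + c ∧ (u + c, v) ∈ A) := by
  rw [Finset.mem_image]
  constructor
  · rintro ⟨p, hp, hp'⟩
    rw [Finset.mem_filter] at hp
    have e1 : p.1 - c = u := congrArg Prod.fst hp'
    have e2 : p.2 = v := congrArg Prod.snd hp'
    have hpt := hp.2
    have e3 : p.1 = u + c := by omega
    refine ⟨by omega, ?_⟩
    rw [← e3, ← e2]
    exact hp.1
  · rintro ⟨h1, h2⟩
    refine ⟨(u + c, v), ?_, ?_⟩
    · rw [Finset.mem_filter]
      exact ⟨h2, h1⟩
    · rw [Prod.mk.injEq]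
      exact ⟨by omega, rfl⟩

lemma mem_shift_up {A : Finset (ℕ × ℕ)} {c t u v : ℕ} :
    ((u, v) ∈ (A.filter (fun p => t ≤ p.1)).image (fun p => (p.1 + c, p.2)) ↔
      c + t ≤ u ∧ (u - c, v) ∈ A) := by
  rw [Finset.mem_image]
  constructor
  · rintro ⟨p, hp, hp'⟩
    rw [Finset.mem_filter] at hp
    have e1 : p.1 + c = u := congrArg Prod.fst hp'
    have e2 : p.2 = v := congrArg Prod.snd hp'
    have hpt := hp.2
    refine ⟨by omega, ?_⟩
    rw [show u - c = p.1 by omega, ← e2]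
    exact hp.1
  · rintro ⟨h1, h2⟩
    refine ⟨(u - c, v), ?_, ?_⟩
    · rw [Finset.mem_filter]
      exact ⟨h2, by omega⟩
    · rw [Prod.mk.injEq]
      exact ⟨by omega, rfl⟩

lemma mem_shift_up' {A : Finset (ℕ × ℕ)} {c u v : ℕ} :
    ((u, v) ∈ A.image (fun p => (p.1 + c, p.2)) ↔ c ≤ u ∧ (u - c, v) ∈ A) := by
  have h : A = A.filter (fun p => 0 ≤ p.1) := by
    rw [Finset.filter_true_of_mem]
    intro p _
    exact Nat.zero_le _
  rw [h, mem_shift_up]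
  rw [← h]
  constructor <;> rintro ⟨h1, h2⟩ <;> exact ⟨by omega, h2⟩

lemma mem_row0 {C : Finset ℕ} {u v : ℕ} :
    ((u, v) ∈ C.image (fun y => ((0 : ℕ), y)) ↔ u = 0 ∧ v ∈ C) := by
  rw [Finset.mem_image]
  constructor
  · rintro ⟨y, hy, hy'⟩
    have e1 : (0 : ℕ) = u := congrArg Prod.fst hy'
    have e2 : y = v := congrArg Prod.snd hy'
    exact ⟨e1.symm, e2 ▸ hy⟩
  · rintro ⟨rfl, hv⟩
    exact ⟨v, hv, rfl⟩

end Shift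

section RT1
variable {l : ℕ} {F D : Finset (ℕ × ℕ)}

lemma fwd_bwd (hl : 1 ≤ l) (hF : IsYoungDiagram F)
    (heq : ∀ x < l, rowLen F x = rowLen F 0) :
    bwd l (fwd l (F, D)) = (F, D) := by
  classical
  set m : ℕ := rowLen F 0 with hm
  set Fb : Finset (ℕ × ℕ) :=
    (F.filter (fun p => l - 1 ≤ p.1)).image (fun p => (p.1 - (l - 1), p.2)) with hFbdef
  set C : Finset ℕ := (D.filter (fun p => p.1 < l)).image Prod.snd with hCdef
  set Db : Finset (ℕ × ℕ) :=
    C.image (fun y => ((0 : ℕ), y)) ∪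
      (D.filter (fun p => l ≤ p.1)).image (fun p => (p.1 - (l - 1), p.2)) with hDbdef
  set a : Finset (ℕ × ℕ) :=
    (D.filter (fun p => p.1 < l)).image (fun p => (p.1, cmpC C p.2)) with hadef
  have hrect : ∀ x < l, ∀ y : ℕ, ((x, y) ∈ F ↔ y < m) := by
    intro x hx y
    rw [mem_iff_lt_rowLen hF, heq x hx]
  have hFbmem : ∀ u v : ℕ, ((u, v) ∈ Fb ↔ (u + (l - 1), v) ∈ F) := by
    intro u v
    rw [hFbdef, mem_shift_down le_rfl]
    constructor
    · rintro ⟨_, h⟩; exact h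
    · intro h; exact ⟨by omega, h⟩
  have hDbmem : ∀ u v : ℕ,
      ((u, v) ∈ Db ↔ (u = 0 ∧ v ∈ C) ∨ (1 ≤ u ∧ (u + (l - 1), v) ∈ D)) := by
    intro u v
    rw [hDbdef, Finset.mem_union, mem_row0, mem_shift_down (by omega : l - 1 ≤ l)]
    constructor
    · rintro (h | ⟨h1, h2⟩)
      · exact Or.inl h
      · exact Or.inr ⟨by omega, h2⟩
    · rintro (h | ⟨h1, h2⟩)
      · exact Or.inl h
      · exact Or.inr ⟨by omega, h2⟩
  -- Fb is Young
  have hFbyoung : IsYoungDiagram Fb := by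
    rintro ⟨u, v⟩ hp x' hx' y' hy'
    simp only at hx' hy'
    rw [hFbmem] at hp
    rw [hFbmem]
    exact hF (u + (l-1), v) hp (x' + (l-1)) (by simp only; omega) y' hy'
  have hm' : rowLen Fb 0 = m := by
    have h1 := mem_iff_lt_rowLen hFbyoung 0
    by_contra hne
    rcases Nat.lt_or_ge (rowLen Fb 0) m with hlt | hge
    · have h2 : (0, rowLen Fb 0) ∈ Fb := by
        rw [hFbmem, hrect (0 + (l-1)) (by omega)]
        exact hlt
      rw [h1] at h2
      omega
    · have hmlt : m < rowLen Fb 0 := by omega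
      have h2 := (h1 m).2 hmlt
      rw [hFbmem, hrect (0 + (l-1)) (by omega)] at h2
      omega
  have hSC : (Db.filter (fun p => p.1 = 0)).image Prod.snd = C := by
    apply Finset.Subset.antisymm
    · intro y hy
      rw [Finset.mem_image] at hy
      obtain ⟨p, hp, rfl⟩ := hy
      rw [Finset.mem_filter] at hp
      obtain ⟨hp1, hp2⟩ := hp
      obtain ⟨u, v⟩ := p
      rw [hDbmem] at hp1
      rcases hp1 with ⟨_, hv⟩ | ⟨h1, _⟩
      · exact hv
      · exact absurd hp2 (by simp only; omega)
    · intro y hy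
      rw [Finset.mem_image]
      refine ⟨(0, y), ?_, rfl⟩
      rw [Finset.mem_filter, hDbmem]
      exact ⟨Or.inl ⟨rfl, hy⟩, rfl⟩
  have hp2C : ∀ p ∈ D.filter (fun p => p.1 < l), p.2 ∈ C := by
    intro p hp
    rw [hCdef]
    exact Finset.mem_image_of_mem _ hp
  show ((Finset.range (l - 1)) ×ˢ (Finset.range (rowLen Fb 0)) ∪
      Fb.image (fun p => (p.1 + (l - 1), p.2)),
    a.image (fun p => (p.1, decC ((Db.filter (fun p => p.1 = 0)).image Prod.snd) p.2)) ∪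
      (Db.filter (fun p => 1 ≤ p.1)).image (fun p => (p.1 + (l - 1), p.2))) = (F, D)
  rw [Prod.mk.injEq]
  constructor
  · -- F component
    ext ⟨u, v⟩
    rw [Finset.mem_union, Finset.mem_product, mem_shift_up', hm']
    simp only [Finset.mem_range]
    constructor
    · rintro (⟨h1, h2⟩ | ⟨h1, h2⟩)
      · rw [hrect u (by omega)]
        exact h2
      · rw [hFbmem] at h2
        rw [show u - (l-1) + (l-1) = u by omega] at h2
        exact h2
    · intro h
      by_cases hul : u < l - 1
      · left
        refine ⟨hul, ?_⟩
        rw [← hrect u (by omega)]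
        exact h
      · right
        refine ⟨by omega, ?_⟩
        rw [hFbmem, show u - (l-1) + (l-1) = u by omega]
        exact h
  · -- D component
    rw [hSC]
    ext ⟨u, v⟩
    rw [Finset.mem_union, mem_shift_up]
    constructor
    · rintro (h | ⟨h1, h2⟩)
      · rw [Finset.mem_image] at h
        obtain ⟨p, hp, hp'⟩ := h
        rw [hadef, Finset.mem_image] at hp
        obtain ⟨q, hq, rfl⟩ := hp
        have hp'' : (q.1, decC C (cmpC C q.2)) = (u, v) := hp'
        rw [decC_cmpC C (hp2C q hq), Prod.mk.injEq] at hp''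
        rw [Finset.mem_filter] at hq
        rw [← hp''.1, ← hp''.2]
        exact hq.1
      · rw [show ((u - (l-1), v) ∈ Db) ↔ _ from hDbmem (u - (l-1)) v] at h2
        rcases h2 with ⟨h3, _⟩ | ⟨h3, h4⟩
        · omega
        · rw [show u - (l-1) + (l-1) = u by omega] at h4
          exact h4
    · intro h
      by_cases hul : u < l
      · left
        rw [Finset.mem_image]
        refine ⟨(u, cmpC C v), ?_, ?_⟩
        · rw [hadef, Finset.mem_image]
          exact ⟨(u, v), by rw [Finset.mem_filter]; exact ⟨h, hul⟩, rfl⟩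
        · have hvC : ((u : ℕ), v).2 ∈ C := hp2C (u, v) (by rw [Finset.mem_filter]; exact ⟨h, hul⟩)
          rw [Prod.mk.injEq]
          exact ⟨rfl, decC_cmpC C hvC⟩
      · right
        refine ⟨by omega, ?_⟩
        rw [show ((u - (l-1), v) ∈ Db) ↔ _ from hDbmem (u - (l-1)) v]
        right
        refine ⟨by omega, ?_⟩
        rw [show u - (l-1) + (l-1) = u by omega]
        exact h

end RT1
section RT2
variable {l : ℕ} {G E a : Finset (ℕ × ℕ)}

lemma bwd_fwd (hl : 1 ≤ l)
    (hnat3a : ∀ p ∈ a, (∀ x' < p.1, ∃ q ∈ a, q.1 = x') ∧ (∀ y' < p.2, ∃ q ∈ a, q.2 = y'))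
    (hfsta : a.image Prod.fst = Finset.range l)
    (hcardcond : (E.filter (fun p => p.1 = 0)).card = (a.image Prod.snd).card) :
    fwd l (bwd l ((G, E), a)) = ((G, E), a) := by
  classical
  set m : ℕ := rowLen G 0 with hm
  set S : Finset ℕ := (E.filter (fun p => p.1 = 0)).image Prod.snd with hSdef
  set F' : Finset (ℕ × ℕ) :=
    (Finset.range (l - 1)) ×ˢ (Finset.range m) ∪ G.image (fun p => (p.1 + (l - 1), p.2))
    with hF'def
  set D' : Finset (ℕ × ℕ) :=
    a.image (fun p => (p.1, decC S p.2)) ∪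
      (E.filter (fun p => 1 ≤ p.1)).image (fun p => (p.1 + (l - 1), p.2)) with hD'def
  have hSmem : ∀ y : ℕ, y ∈ S ↔ (0, y) ∈ E := by
    intro y
    rw [hSdef, Finset.mem_image]
    constructor
    · rintro ⟨p, hp, rfl⟩
      rw [Finset.mem_filter] at hp
      have h1 : (p.1, p.2) ∈ E := hp.1
      rw [hp.2] at h1
      exact h1
    · intro h
      exact ⟨(0, y), by rw [Finset.mem_filter]; exact ⟨h, rfl⟩, rfl⟩
  have hScard : S.card = (E.filter (fun p => p.1 = 0)).card := by
    rw [hSdef]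
    apply Finset.card_image_of_injOn
    intro p hp q hq hpq
    simp only [Finset.coe_filter, Set.mem_setOf_eq] at hp hq
    exact Prod.ext (hp.2.trans hq.2.symm) hpq
  have hasnd : a.image Prod.snd = Finset.range S.card := by
    have hdc : ∀ y ∈ a.image Prod.snd, ∀ b ≤ y, b ∈ a.image Prod.snd := by
      intro y hy b hb
      rcases Nat.eq_or_lt_of_le hb with rfl | hblt
      · exact hy
      · rw [Finset.mem_image] at hy
        obtain ⟨p, hp, rfl⟩ := hy
        obtain ⟨q, hq, hq'⟩ := (hnat3a p hp).2 b hblt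
        rw [Finset.mem_image]
        exact ⟨q, hq, hq'⟩
    have h := downclosed_eq_range _ hdc
    rw [h, hScard, hcardcond]
  have hp2k : ∀ p ∈ a, p.2 < S.card := by
    intro p hp
    have : p.2 ∈ a.image Prod.snd := Finset.mem_image_of_mem _ hp
    rwa [hasnd, Finset.mem_range] at this
  have hp1l : ∀ p ∈ a, p.1 < l := by
    intro p hp
    have : p.1 ∈ a.image Prod.fst := Finset.mem_image_of_mem _ hp
    rwa [hfsta, Finset.mem_range] at this
  have hsndex : ∀ c < S.card, ∃ q ∈ a, q.2 = c := by
    intro c hc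
    have : c ∈ a.image Prod.snd := by rw [hasnd, Finset.mem_range]; exact hc
    rw [Finset.mem_image] at this
    obtain ⟨q, hq, hq'⟩ := this
    exact ⟨q, hq, hq'⟩
  have hF'mem : ∀ u v : ℕ,
      ((u, v) ∈ F' ↔ (u < l - 1 ∧ v < m) ∨ (l - 1 ≤ u ∧ (u - (l - 1), v) ∈ G)) := by
    intro u v
    rw [hF'def, Finset.mem_union, Finset.mem_product, mem_shift_up']
    simp only [Finset.mem_range]
  have hD'mem : ∀ u v : ℕ,
      ((u, v) ∈ D' ↔ (u < l ∧ ∃ c, (u, c) ∈ a ∧ decC S c = v) ∨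
        (l ≤ u ∧ (u - (l - 1), v) ∈ E)) := by
    intro u v
    rw [hD'def, Finset.mem_union, Finset.mem_image, mem_shift_up]
    constructor
    · rintro (⟨p, hp, hp'⟩ | ⟨h1, h2⟩)
      · have e1 : p.1 = u := congrArg Prod.fst hp'
        have e2 : decC S p.2 = v := congrArg Prod.snd hp'
        left
        refine ⟨by rw [← e1]; exact hp1l p hp, p.2, ?_, e2⟩
        rw [← e1]
        exact hp
      · exact Or.inr ⟨by omega, h2⟩
    · rintro (⟨hu, c, hc, hc'⟩ | ⟨hu, hE⟩)
      · exact Or.inl ⟨(u, c), hc, by rw [Prod.mk.injEq]; exact ⟨rfl, hc'⟩⟩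
      · exact Or.inr ⟨by omega, hE⟩
  have hC'' : ((D'.filter (fun p => p.1 < l)).image Prod.snd) = S := by
    apply Finset.Subset.antisymm
    · intro y hy
      rw [Finset.mem_image] at hy
      obtain ⟨p, hp, rfl⟩ := hy
      rw [Finset.mem_filter] at hp
      obtain ⟨hp1, hp2⟩ := hp
      obtain ⟨pu, pv⟩ := p
      rw [hD'mem] at hp1
      rcases hp1 with ⟨_, c, hc, hc'⟩ | ⟨h1, _⟩
      · show pv ∈ S
        rw [← hc']
        exact decC_mem S (hp2k (pu, c) hc)
      · exact absurd hp2 (by simp only; omega)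
    · intro y hy
      obtain ⟨q, hq, hq'⟩ := hsndex (cmpC S y) (cmpC_lt_card S hy)
      rw [Finset.mem_image]
      refine ⟨(q.1, y), ?_, rfl⟩
      rw [Finset.mem_filter]
      refine ⟨?_, hp1l q hq⟩
      rw [hD'mem]
      left
      refine ⟨hp1l q hq, q.2, ?_, ?_⟩
      · rw [show ((q.1 : ℕ), q.2) = q from rfl]
        exact hq
      · rw [hq']
        exact decC_cmpC S hy
  have hfilter : D'.filter (fun p => p.1 < l) = a.image (fun p => (p.1, decC S p.2)) := by
    apply Finset.Subset.antisymm
    · rintro ⟨pu, pv⟩ hp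
      rw [Finset.mem_filter] at hp
      obtain ⟨hp1, hp2⟩ := hp
      rw [hD'mem] at hp1
      rcases hp1 with ⟨_, c, hc, hc'⟩ | ⟨h1, _⟩
      · rw [Finset.mem_image]
        exact ⟨(pu, c), hc, by rw [Prod.mk.injEq]; exact ⟨rfl, hc'⟩⟩
      · exact absurd hp2 (by simp only; omega)
    · intro p hp
      rw [Finset.mem_image] at hp
      obtain ⟨q, hq, rfl⟩ := hp
      rw [Finset.mem_filter]
      constructor
      · rw [hD'mem]
        exact Or.inl ⟨hp1l q hq, q.2, by rw [show ((q.1 : ℕ), q.2) = q from rfl]; exact hq, rfl⟩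
      · show q.1 < l
        exact hp1l q hq
  show (((F'.filter (fun p => l - 1 ≤ p.1)).image (fun p => (p.1 - (l - 1), p.2)),
      ((D'.filter (fun p => p.1 < l)).image Prod.snd).image (fun y => ((0 : ℕ), y)) ∪
        (D'.filter (fun p => l ≤ p.1)).image (fun p => (p.1 - (l - 1), p.2))),
    (D'.filter (fun p => p.1 < l)).image
      (fun p => (p.1, cmpC ((D'.filter (fun p => p.1 < l)).image Prod.snd) p.2))) = ((G, E), a)
  rw [Prod.mk.injEq, Prod.mk.injEq, hC'']
  refine ⟨⟨?_, ?_⟩, ?_⟩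
  · -- G component
    ext ⟨u, v⟩
    rw [mem_shift_down le_rfl, hF'mem]
    constructor
    · rintro ⟨h1, ⟨h2, _⟩ | ⟨h2, h3⟩⟩
      · omega
      · rw [show u + (l-1) - (l-1) = u by omega] at h3
        exact h3
    · intro h
      refine ⟨by omega, Or.inr ⟨by omega, ?_⟩⟩
      rw [show u + (l-1) - (l-1) = u by omega]
      exact h
  · -- E component
    ext ⟨u, v⟩
    rw [Finset.mem_union, mem_row0, mem_shift_down (by omega : l - 1 ≤ l)]
    constructor
    · rintro (⟨rfl, hv⟩ | ⟨h1, h2⟩)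
      · rw [← hSmem]
        exact hv
      · rw [show ((u + (l-1) : ℕ), v) ∈ D' ↔ _ from hD'mem (u + (l-1)) v] at h2
        rcases h2 with ⟨h3, _⟩ | ⟨_, h4⟩
        · omega
        · rw [show u + (l-1) - (l-1) = u by omega] at h4
          exact h4
    · intro h
      rcases Nat.eq_zero_or_pos u with rfl | hu
      · left
        exact ⟨rfl, (hSmem v).2 h⟩
      · right
        refine ⟨by omega, ?_⟩
        rw [show ((u + (l-1) : ℕ), v) ∈ D' ↔ _ from hD'mem (u + (l-1)) v]
        right
        refine ⟨by omega, ?_⟩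
        rw [show u + (l-1) - (l-1) = u by omega]
        exact h
  · -- a component
    rw [hfilter, Finset.image_image]
    have heqon : ∀ p ∈ a, ((fun p => (p.1, cmpC S p.2)) ∘ fun p : ℕ × ℕ => (p.1, decC S p.2)) p
        = id p := by
      intro p hp
      show (p.1, cmpC S (decC S p.2)) = p
      rw [cmpC_decC S (hp2k p hp)]
    rw [Finset.image_congr heqon, Finset.image_id]

end RT2
theorem tlt_cut_bijection (n l : ℕ) (hn : 1 ≤ n) (hl : 1 ≤ l) :
    Set.ncard {FD : Finset (ℕ × ℕ) × Finset (ℕ × ℕ) |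
        IsTLT FD.1 FD.2 ∧ FD.2.card = n + l - 1 ∧
        (∀ x < l, 0 < rowLen FD.1 x) ∧
        (∀ x < l, rowLen FD.1 x = rowLen FD.1 0)} =
      Set.ncard {ba : (Finset (ℕ × ℕ) × Finset (ℕ × ℕ)) × Finset (ℕ × ℕ) |
        IsTLT ba.1.1 ba.1.2 ∧ ba.1.2.card = n ∧
        IsNAT ba.2 ∧ ba.2.image Prod.fst = Finset.range l ∧
        (ba.1.2.filter (fun p => p.1 = 0)).card = (ba.2.image Prod.snd).card} := by
  classical
  set L : Set (Finset (ℕ × ℕ) × Finset (ℕ × ℕ)) :=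
    {FD | IsTLT FD.1 FD.2 ∧ FD.2.card = n + l - 1 ∧
      (∀ x < l, 0 < rowLen FD.1 x) ∧ (∀ x < l, rowLen FD.1 x = rowLen FD.1 0)} with hL
  set Rt : Set ((Finset (ℕ × ℕ) × Finset (ℕ × ℕ)) × Finset (ℕ × ℕ)) :=
    {ba | IsTLT ba.1.1 ba.1.2 ∧ ba.1.2.card = n ∧
      IsNAT ba.2 ∧ ba.2.image Prod.fst = Finset.range l ∧
      (ba.1.2.filter (fun p => p.1 = 0)).card = (ba.2.image Prod.snd).card} with hRt
  have himg : Rt = (fwd l) '' L := by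
    apply Set.eq_of_subset_of_subset
    · rintro ⟨⟨G, E⟩, A⟩ hx
      obtain ⟨⟨hG, hEG, h00E, hxorE, hrowcovG, hcolcovG⟩, hEcard, ⟨h00a, hxora, hnat3a⟩,
        hfsta, hcardcond⟩ := hx
      refine ⟨bwd l ((G, E), A), ?_, bwd_fwd hl hnat3a hfsta hcardcond⟩
      obtain ⟨h1, h2, h3, h4⟩ := bwd_maps hl hG hEG h00E hxorE hrowcovG hcolcovG
        h00a hxora hnat3a hfsta hcardcond
      have h2' : (bwd l ((G, E), A)).2.card = E.card + (l - 1) := h2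
      have hE' : E.card = n := hEcard
      have h2'' : (bwd l ((G, E), A)).2.card = n + l - 1 := by omega
      exact ⟨h1, h2'', h3, h4⟩
    · rintro x ⟨z, hz, rfl⟩
      obtain ⟨F, D⟩ := z
      obtain ⟨⟨hF, hDF, h00, hxor, hrowcov, hcolcov⟩, hDcard, hpos, heq⟩ := hz
      obtain ⟨h1, h2, h3, h4, h5⟩ := fwd_maps hl hF hDF h00 hxor hrowcov hcolcov hpos heq
      have h2' : (fwd l (F, D)).1.2.card + (l - 1) = D.card := h2
      have hD' : D.card = n + l - 1 := hDcard
      have h2'' : (fwd l (F, D)).1.2.card = n := by omega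
      exact ⟨h1, h2'', h3, h4, h5⟩
  have hinj : Set.InjOn (fwd l) L := by
    rintro ⟨F, D⟩ hx ⟨F2, D2⟩ hy hxy
    obtain ⟨⟨hF, _, _, _, _, _⟩, _, _, heq⟩ := hx
    obtain ⟨⟨hF2, _, _, _, _, _⟩, _, _, heq2⟩ := hy
    calc (F, D) = bwd l (fwd l (F, D)) := (fwd_bwd hl hF heq).symm
      _ = bwd l (fwd l (F2, D2)) := by rw [hxy]
      _ = (F2, D2) := fwd_bwd hl hF2 heq2
  rw [himg]
  exact (Set.ncard_image_of_injOn hinj).symm
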